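/- Let τ be a preradical on the category of right R-modules with τ(R) = 0. If M is a max-projective right R-module, then M/τ(M) is max-projective. -/
import Mathlib


universe u v

/-- A module `M` is *max-projective* if every homomorphism `M → R/I`, for `I` a
maximal right ideal of `R`, factors through the canonical projection `R → R/I`. -/
def MaxProjective (R : Type u) [Ring R] (M : Type v) [AddCommGroup M] [Module R M] : Prop :=
  ∀ I : Submodule R R, IsCoatom I → ∀ g : M →ₗ[R] R ⧸ I,
    ∃ h : M →ₗ[R] R, I.mkQ.comp h = g

/-- Let `τ` be a preradical (a subfunctor of the identity on Mod-R) with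
`τ(R) = 0`. If `M` is max-projective, then `M/τ(M)` is max-projective. -/
theorem quotient_preradical_maxProjective (R : Type u) [Ring R]
    (τ : ∀ (M : Type u) [AddCommGroup M] [Module R M], Submodule R M)
    (hnat : ∀ (M N : Type u) [AddCommGroup M] [Module R M] [AddCommGroup N] [Module R N]
      (f : M →ₗ[R] N), (τ M).map f ≤ τ N)
    (hR : τ R = ⊥)
    (M : Type u) [AddCommGroup M] [Module R M] (hmp : MaxProjective R M) :
    MaxProjective R (M ⧸ τ M) := by
  intro I hI g
  obtain ⟨h, hh⟩ := hmp I hI (g.comp (τ M).mkQ)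
  have hker : τ M ≤ LinearMap.ker h := by
    intro x hx
    have : h x ∈ τ R := hnat M R h ⟨x, hx, rfl⟩
    simpa [hR] using this
  refine ⟨(τ M).liftQ h hker, ?_⟩
  ext x
  simpa using LinearMap.congr_fun hh x
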